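/- Let β ∈ (0,1], C > 0, a ≠ 0, and let θ : (0,∞) → ℝ be locally absolutely continuous with |θ′(t) − a| ≤ C/t^β for a.e. t ∈ (0,∞). Then for any x ≥ x₀ > s(|a|,β,C) = (100C·|a|^{β−1} + 10⁴)^{1/β}·|a|^{−1}, both |∫_{x₀}^x sin θ(t)/t dt| ≤ r(|a|,β,C)/(|a|^β·x₀^β) and |∫_{x₀}^x cos θ(t)/t dt| ≤ r(|a|,β,C)/(|a|^β·x₀^β), where r(|a|,β,C) = 30C·β^{−1}·|a|^{β−1} + 10π. -/

import Mathlib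

open MeasureTheory Real Set

noncomputable section

/-- `s(α,β,C) = (100·C·α^{β-1} + 10⁴)^{1/β}·α⁻¹`. -/
def sConst (α β C : ℝ) : ℝ := (100 * C * α ^ (β - 1) + 10 ^ 4) ^ (1 / β) / α

/-- `r(α,β,C) = 30·C·β⁻¹·α^{β-1} + 10π`. -/
def rConst (α β C : ℝ) : ℝ := 30 * C / β * α ^ (β - 1) + 10 * π


lemma int_rpow_neg_two_le (p q : ℝ) (hp : 0 < p) (hq : p ≤ q) :
    (∫ t in p..q, t ^ (-2 : ℝ)) ≤ 1 / p := by
  have hnot : (0:ℝ) ∉ uIcc p q := by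
    rw [uIcc_of_le hq]; intro h; exact absurd h.1 (not_le.2 hp)
  rw [integral_rpow (Or.inr ⟨by norm_num, hnot⟩)]
  norm_num
  rw [Real.rpow_neg_one, Real.rpow_neg_one]
  have h1 : 0 < q⁻¹ := by rw [inv_pos]; linarith
  have h2 : 0 < p⁻¹ := by rw [inv_pos]; linarith
  have h3 : (q⁻¹ - p⁻¹) / (-1) = p⁻¹ - q⁻¹ := by ring
  rw [h3]
  linarith

lemma int_rpow_neg_one_sub_le (p q β : ℝ) (hβ0 : 0 < β) (hp : 0 < p) (hq : p ≤ q) :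
    (∫ t in p..q, t ^ (-1 - β : ℝ)) ≤ 1 / (β * p ^ β) := by
  have hnot : (0:ℝ) ∉ uIcc p q := by
    rw [uIcc_of_le hq]; intro h; exact absurd h.1 (not_le.2 hp)
  rw [integral_rpow (Or.inr ⟨by intro h; nlinarith, hnot⟩)]
  have he : (-1 - β : ℝ) + 1 = -β := by ring
  rw [he]
  have h1 : 0 ≤ q ^ (-β : ℝ) := Real.rpow_nonneg (by linarith) _
  have h2 : p ^ (-β : ℝ) = (p ^ β)⁻¹ := Real.rpow_neg hp.le β
  have hβx : 0 < p ^ β := Real.rpow_pos_of_pos hp β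
  have h4 : (q ^ (-β:ℝ) - p ^ (-β:ℝ)) / (-β) = (p ^ (-β:ℝ) - q ^ (-β:ℝ)) / β := by
    rw [div_neg]
    ring
  rw [h4, h2]
  rw [div_le_div_iff₀ hβ0 (by positivity)]
  have h3 : (p ^ β)⁻¹ * (β * p ^ β) = β := by field_simp
  nlinarith [mul_nonneg (mul_nonneg h1 hβ0.le) hβx.le]

set_option maxHeartbeats 1000000 in
lemma osc_key (β C a : ℝ) (hβ0 : 0 < β) (hβ1 : β ≤ 1) (hC : 0 < C) (ha : 0 < a)
    (θ θ' : ℝ → ℝ)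
    (hAC : ∀ s t : ℝ, 0 < s → s ≤ t → θ t - θ s = ∫ u in s..t, θ' u)
    (hInt : ∀ s t : ℝ, 0 < s → s ≤ t → IntervalIntegrable θ' volume s t)
    (hbd : ∀ᵐ t ∂volume, 0 < t → |θ' t - a| ≤ C / t ^ β)
    (g : ℝ → ℝ) (hg1 : ∀ y, |g y| ≤ 1) (hgl : ∀ y z : ℝ, |g y - g z| ≤ |y - z|)
    (hgc : Continuous g) (hgp : ∀ y, g (y + π) = -g y)
    (x₀ x : ℝ) (hx₀ : sConst a β C < x₀) (hx : x₀ ≤ x) :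
    |∫ t in x₀..x, g (θ t) / t| ≤ rConst a β C / (a ^ β * x₀ ^ β) := by
  have hs0 : 0 < sConst a β C := by
    unfold sConst
    have h1 : (0:ℝ) < 100 * C * a ^ (β - 1) + 10 ^ 4 := by
      have := Real.rpow_pos_of_pos ha (β - 1); positivity
    positivity
  have hx₀pos : 0 < x₀ := hs0.trans hx₀
  have hax1 : (1:ℝ) ≤ a * x₀ := by
    have h1 : (0:ℝ) < 100 * C * a ^ (β - 1) + 10 ^ 4 := by
      have := Real.rpow_pos_of_pos ha (β - 1); positivity
    have h2 : (1:ℝ) ≤ (100 * C * a ^ (β - 1) + 10 ^ 4) ^ (1 / β) := by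
      have hb1 : (1:ℝ) ≤ 100 * C * a ^ (β - 1) + 10 ^ 4 := by
        have := Real.rpow_pos_of_pos ha (β - 1)
        nlinarith
      calc (1:ℝ) = (1:ℝ) ^ (1/β) := (Real.one_rpow _).symm
        _ ≤ (100 * C * a ^ (β - 1) + 10 ^ 4) ^ (1 / β) :=
            Real.rpow_le_rpow (by norm_num) hb1 (by positivity)
    have h3 : sConst a β C * a ≤ a * x₀ := by
      have := mul_le_mul_of_nonneg_right hx₀.le ha.le
      linarith [mul_comm x₀ a]
    have h4 : sConst a β C * a = (100 * C * a ^ (β - 1) + 10 ^ 4) ^ (1 / β) := by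
      unfold sConst; field_simp
    linarith
  set δ : ℝ := π / a with hδdef
  have hδ : 0 < δ := div_pos Real.pi_pos ha
  -- continuity of θ on [x₀, x]
  have hθeq : ∀ t ∈ Icc x₀ x, θ t = θ x₀ + ∫ u in x₀..t, θ' u := by
    intro t ht
    have := hAC x₀ t hx₀pos ht.1
    linarith
  have hθ'int : IntervalIntegrable θ' volume x₀ x := hInt x₀ x hx₀pos hx
  have hθc : ContinuousOn θ (Icc x₀ x) := by
    have h1 : ContinuousOn (fun t => θ x₀ + ∫ u in x₀..t, θ' u) (Icc x₀ x) := by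
      apply continuousOn_const.add
      have := intervalIntegral.continuousOn_primitive_interval
        (f := θ') (a := x₀) (b := x) (μ := volume) ?_
      · rwa [uIcc_of_le hx] at this
      · rw [uIcc_of_le hx]
        rw [intervalIntegrable_iff'] at hθ'int
        rwa [uIcc_of_le hx] at hθ'int
    exact ContinuousOn.congr h1 hθeq
  set f : ℝ → ℝ := fun t => g (θ t) / t with hfdef
  have hfc : ContinuousOn f (Icc x₀ x) := by
    apply ContinuousOn.div (hgc.comp_continuousOn hθc) continuousOn_id
    intro t ht
    exact ne_of_gt (lt_of_lt_of_le hx₀pos ht.1)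
  have hfi : ∀ a' b', x₀ ≤ a' → a' ≤ b' → b' ≤ x → IntervalIntegrable f volume a' b' := by
    intro a' b' h1 h2 h3
    apply ContinuousOn.intervalIntegrable
    apply hfc.mono
    rw [uIcc_of_le h2]
    exact Icc_subset_Icc h1 h3
  -- bound on |f t| for t ≥ x₀
  have hfb : ∀ t, x₀ ≤ t → |f t| ≤ 1 / x₀ := by
    intro t ht
    have ht0 : 0 < t := lt_of_lt_of_le hx₀pos ht
    have : |f t| = |g (θ t)| / t := by
      rw [hfdef]; rw [abs_div, abs_of_pos ht0]
    rw [this]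
    calc |g (θ t)| / t ≤ 1 / t := by gcongr; exact hg1 _
      _ ≤ 1 / x₀ := by gcongr
  -- the phase increment estimate
  have hεb : ∀ t, x₀ ≤ t → |θ (t + δ) - θ t - π| ≤ C * δ / t ^ β := by
    intro t ht
    have ht0 : 0 < t := lt_of_lt_of_le hx₀pos ht
    have htd : t ≤ t + δ := by linarith
    have h1 : θ (t + δ) - θ t = ∫ u in t..(t + δ), θ' u := hAC t (t + δ) ht0 htd
    have h2 : (∫ u in t..(t + δ), (a:ℝ)) = π := by
      rw [intervalIntegral.integral_const, smul_eq_mul]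
      have he : t + δ - t = δ := by ring
      rw [he, hδdef]
      field_simp
    have h3 : θ (t + δ) - θ t - π = ∫ u in t..(t + δ), (θ' u - a) := by
      rw [intervalIntegral.integral_sub (hInt t (t + δ) ht0 htd) intervalIntegrable_const,
        ← h1, h2]
    rw [h3]
    have h4 : |∫ u in t..(t + δ), (θ' u - a)| ≤ (C / t ^ β) * |t + δ - t| := by
      rw [← Real.norm_eq_abs]
      apply intervalIntegral.norm_integral_le_of_norm_le_const_ae
      filter_upwards [hbd] with u hu hmem
      rw [uIoc_of_le htd] at hmem
      have hu0 : 0 < u := ht0.trans hmem.1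
      rw [Real.norm_eq_abs]
      refine (hu hu0).trans ?_
      have hub : 0 < u ^ β := Real.rpow_pos_of_pos hu0 β
      have htb : 0 < t ^ β := Real.rpow_pos_of_pos ht0 β
      have : t ^ β ≤ u ^ β := Real.rpow_le_rpow ht0.le hmem.1.le hβ0.le
      gcongr
    calc |∫ u in t..(t + δ), (θ' u - a)| ≤ (C / t ^ β) * |t + δ - t| := h4
      _ = C * δ / t ^ β := by
          rw [add_sub_cancel_left, abs_of_pos hδ]; ring
  -- pointwise bound on f t + f (t+δ)
  have hpt : ∀ t, x₀ ≤ t → |f t + f (t + δ)| ≤ δ * (t⁻¹ * t⁻¹) + C * δ * (t⁻¹ * (t ^ β)⁻¹) := by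
    intro t ht
    have ht0 : 0 < t := lt_of_lt_of_le hx₀pos ht
    have htd0 : 0 < t + δ := by linarith
    have htβ : 0 < t ^ β := Real.rpow_pos_of_pos ht0 β
    set ε : ℝ := θ (t + δ) - θ t - π with hεdef
    have hθs : θ (t + δ) = (θ t + ε) + π := by rw [hεdef]; ring
    have hfs : f (t + δ) = -g (θ t + ε) / (t + δ) := by
      rw [hfdef]; simp only [hθs, hgp]
    have hsplit : f t + f (t + δ)
        = g (θ t) * (1 / t - 1 / (t + δ)) + (g (θ t) - g (θ t + ε)) / (t + δ) := by
      rw [hfs, hfdef]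
      field_simp
      try ring
    rw [hsplit]
    have h1 : |g (θ t) * (1 / t - 1 / (t + δ))| ≤ δ * (t⁻¹ * t⁻¹) := by
      rw [abs_mul]
      have he : 1 / t - 1 / (t + δ) = δ / (t * (t + δ)) := by field_simp; ring
      have h2 : |1 / t - 1 / (t + δ)| = δ / (t * (t + δ)) := by
        rw [he, abs_of_pos (by positivity)]
      rw [h2]
      calc |g (θ t)| * (δ / (t * (t + δ))) ≤ 1 * (δ / (t * (t + δ))) := by
            apply mul_le_mul_of_nonneg_right (hg1 _) (by positivity)
        _ ≤ δ * (t⁻¹ * t⁻¹) := by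
            rw [one_mul]
            have he : δ * (t⁻¹ * t⁻¹) = δ / (t * t) := by
              field_simp
            rw [he]
            gcongr
            nlinarith
    have h2 : |(g (θ t) - g (θ t + ε)) / (t + δ)| ≤ C * δ * (t⁻¹ * (t ^ β)⁻¹) := by
      rw [abs_div, abs_of_pos htd0]
      have h3 : |g (θ t) - g (θ t + ε)| ≤ C * δ / t ^ β := by
        refine (hgl _ _).trans ?_
        have : |θ t - (θ t + ε)| = |ε| := by rw [abs_sub_comm]; simp
        rw [this]
        exact hεb t ht
      calc |g (θ t) - g (θ t + ε)| / (t + δ) ≤ (C * δ / t ^ β) / (t + δ) := by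
            gcongr
        _ ≤ (C * δ / t ^ β) / t := by
            gcongr
            linarith
        _ = C * δ * (t⁻¹ * (t ^ β)⁻¹) := by
            field_simp
            try ring
    calc |g (θ t) * (1 / t - 1 / (t + δ)) + (g (θ t) - g (θ t + ε)) / (t + δ)|
        ≤ |g (θ t) * (1 / t - 1 / (t + δ))| + |(g (θ t) - g (θ t + ε)) / (t + δ)| :=
          abs_add_le _ _
      _ ≤ δ * (t⁻¹ * t⁻¹) + C * δ * (t⁻¹ * (t ^ β)⁻¹) := add_le_add h1 h2
  set J : ℝ := ∫ t in x₀..x, f t with hJdef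
  have hmain : |J| ≤ 3 / 2 * (δ / x₀) + C * δ / (2 * β * x₀ ^ β) := by
    rcases le_or_gt x (x₀ + δ) with hcase | hcase
    · -- short interval
      have h1 : |J| ≤ (1 / x₀) * |x - x₀| := by
        rw [← Real.norm_eq_abs]
        apply intervalIntegral.norm_integral_le_of_norm_le_const
        intro u hu
        rw [uIoc_of_le hx] at hu
        rw [Real.norm_eq_abs]
        exact hfb u hu.1.le
      have h2 : (1 / x₀) * |x - x₀| ≤ δ / x₀ := by
        rw [abs_of_nonneg (by linarith)]
        rw [div_mul_eq_mul_div, one_mul]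
        gcongr
        linarith
      have h3 : 0 ≤ C * δ / (2 * β * x₀ ^ β) := by positivity
      have h4 : 0 ≤ δ / x₀ := by positivity
      linarith
    · -- long interval: reflection trick
      have hx1 : x₀ ≤ x - δ := by linarith
      have hx2 : x₀ + δ ≤ x := by linarith
      have hA : IntervalIntegrable f volume x₀ (x₀ + δ) := hfi _ _ le_rfl (by linarith) hx2
      have hB : IntervalIntegrable f volume (x₀ + δ) x := hfi _ _ (by linarith) hx2 le_rfl
      have hP : IntervalIntegrable f volume x₀ (x - δ) := hfi _ _ le_rfl hx1 (by linarith)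
      have hQ : IntervalIntegrable f volume (x - δ) x := hfi _ _ hx1 (by linarith) le_rfl
      have hshift : IntervalIntegrable (fun t => f (t + δ)) volume x₀ (x - δ) := by
        apply ContinuousOn.intervalIntegrable
        rw [uIcc_of_le hx1]
        have : ContinuousOn (fun t : ℝ => t + δ) (Icc x₀ (x - δ)) :=
          (continuous_add_right δ).continuousOn
        apply hfc.comp this
        intro t ht
        simp only [Set.mem_Icc] at ht ⊢
        constructor <;> linarith
      have hJ1 : J = (∫ t in x₀..(x₀ + δ), f t) + ∫ t in (x₀ + δ)..x, f t :=
        (intervalIntegral.integral_add_adjacent_intervals hA hB).symm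
      have hJ2 : J = (∫ t in x₀..(x - δ), f t) + ∫ t in (x - δ)..x, f t :=
        (intervalIntegral.integral_add_adjacent_intervals hP hQ).symm
      have hBshift : (∫ t in (x₀ + δ)..x, f t) = ∫ t in x₀..(x - δ), f (t + δ) := by
        rw [intervalIntegral.integral_comp_add_right f δ]
        congr 1
        ring
      have hsum : (∫ t in x₀..(x - δ), f t) + (∫ t in x₀..(x - δ), f (t + δ))
          = ∫ t in x₀..(x - δ), (f t + f (t + δ)) :=
        (intervalIntegral.integral_add hP hshift).symm
      have h2J : J + J = (∫ t in x₀..(x₀ + δ), f t) + (∫ t in (x - δ)..x, f t)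
          + ∫ t in x₀..(x - δ), (f t + f (t + δ)) := by
        rw [← hsum, ← hBshift]
        nth_rewrite 1 [hJ1]
        nth_rewrite 1 [hJ2]
        ring
      -- bounds
      have hAb : |∫ t in x₀..(x₀ + δ), f t| ≤ δ / x₀ := by
        have h1 : |∫ t in x₀..(x₀ + δ), f t| ≤ (1 / x₀) * |x₀ + δ - x₀| := by
          rw [← Real.norm_eq_abs]
          apply intervalIntegral.norm_integral_le_of_norm_le_const
          intro u hu
          rw [uIoc_of_le (by linarith : x₀ ≤ x₀ + δ)] at hu
          rw [Real.norm_eq_abs]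
          exact hfb u hu.1.le
        rw [add_sub_cancel_left, abs_of_pos hδ] at h1
        calc |∫ t in x₀..(x₀ + δ), f t| ≤ (1 / x₀) * δ := h1
          _ = δ / x₀ := by ring
      have hQb : |∫ t in (x - δ)..x, f t| ≤ δ / x₀ := by
        have h1 : |∫ t in (x - δ)..x, f t| ≤ (1 / x₀) * |x - (x - δ)| := by
          rw [← Real.norm_eq_abs]
          apply intervalIntegral.norm_integral_le_of_norm_le_const
          intro u hu
          rw [uIoc_of_le (by linarith : x - δ ≤ x)] at hu
          rw [Real.norm_eq_abs]
          exact hfb u (by linarith [hu.1])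
        have : |x - (x - δ)| = δ := by rw [abs_of_pos (by linarith)]; ring_nf
        rw [this] at h1
        calc |∫ t in (x - δ)..x, f t| ≤ (1 / x₀) * δ := h1
          _ = δ / x₀ := by ring
      -- main middle bound
      set b : ℝ → ℝ := fun t => δ * (t⁻¹ * t⁻¹) + C * δ * (t⁻¹ * (t ^ β)⁻¹) with hbdef
      have hbc : ContinuousOn b (uIcc x₀ (x - δ)) := by
        rw [uIcc_of_le hx1]
        have hne : ∀ t ∈ Icc x₀ (x - δ), t ≠ 0 := fun t ht =>
          ne_of_gt (lt_of_lt_of_le hx₀pos ht.1)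
        have h1 : ContinuousOn (fun t : ℝ => t⁻¹) (Icc x₀ (x - δ)) :=
          continuousOn_id.inv₀ hne
        have h2 : ContinuousOn (fun t : ℝ => (t ^ β)⁻¹) (Icc x₀ (x - δ)) := by
          apply ContinuousOn.inv₀
          · intro t ht
            exact (Real.continuousAt_rpow_const t β (Or.inl (hne t ht))).continuousWithinAt
          · intro t ht
            exact ne_of_gt (Real.rpow_pos_of_pos (lt_of_lt_of_le hx₀pos ht.1) β)
        exact (continuousOn_const.mul (h1.mul h1)).add
          (continuousOn_const.mul (h1.mul h2))
      have hbi : IntervalIntegrable b volume x₀ (x - δ) := hbc.intervalIntegrable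
      have hMb : |∫ t in x₀..(x - δ), (f t + f (t + δ))| ≤ |∫ t in x₀..(x - δ), b t| := by
        rw [← Real.norm_eq_abs]
        refine (intervalIntegral.norm_integral_le_of_norm_le hx1 ?_ hbi).trans (le_abs_self _)
        refine Filter.Eventually.of_forall (fun t ht => ?_)
        rw [Real.norm_eq_abs]
        exact hpt t ht.1.le
      -- compute the integral of b
      have hIb : (∫ t in x₀..(x - δ), b t) ≤ δ / x₀ + C * δ / (β * x₀ ^ β) := by
        have e1 : ∀ t ∈ Icc x₀ (x - δ), t⁻¹ * t⁻¹ = t ^ (-2 : ℝ) := by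
          intro t ht
          have ht0 : 0 < t := lt_of_lt_of_le hx₀pos ht.1
          rw [show (-2 : ℝ) = (-1) + (-1) by norm_num, Real.rpow_add ht0,
            Real.rpow_neg_one]
        have e2 : ∀ t ∈ Icc x₀ (x - δ), t⁻¹ * (t ^ β)⁻¹ = t ^ (-1 - β) := by
          intro t ht
          have ht0 : 0 < t := lt_of_lt_of_le hx₀pos ht.1
          rw [show (-1 - β : ℝ) = (-1) + (-β) by ring, Real.rpow_add ht0,
            Real.rpow_neg_one, Real.rpow_neg ht0.le]
        have hcongr : (∫ t in x₀..(x - δ), b t)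
            = ∫ t in x₀..(x - δ), (δ * t ^ (-2 : ℝ) + C * δ * t ^ (-1 - β)) := by
          apply intervalIntegral.integral_congr
          intro t ht
          rw [uIcc_of_le hx1] at ht
          rw [hbdef]
          simp only
          rw [e1 t ht, e2 t ht]
        rw [hcongr]
        have hi1 : IntervalIntegrable (fun t : ℝ => t ^ (-2 : ℝ)) volume x₀ (x - δ) := by
          apply ContinuousOn.intervalIntegrable
          intro t ht
          rw [uIcc_of_le hx1] at ht
          exact (Real.continuousAt_rpow_const t _
            (Or.inl (ne_of_gt (lt_of_lt_of_le hx₀pos ht.1)))).continuousWithinAt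
        have hi2 : IntervalIntegrable (fun t : ℝ => t ^ (-1 - β : ℝ)) volume x₀ (x - δ) := by
          apply ContinuousOn.intervalIntegrable
          intro t ht
          rw [uIcc_of_le hx1] at ht
          exact (Real.continuousAt_rpow_const t _
            (Or.inl (ne_of_gt (lt_of_lt_of_le hx₀pos ht.1)))).continuousWithinAt
        have hnot : (0 : ℝ) ∉ uIcc x₀ (x - δ) := by
          rw [uIcc_of_le hx1]
          intro h
          exact absurd h.1 (not_le.2 hx₀pos)
        have hv1 : (∫ t in x₀..(x - δ), t ^ (-2 : ℝ)) ≤ 1 / x₀ :=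
          int_rpow_neg_two_le x₀ (x - δ) hx₀pos hx1
        have hv2 : (∫ t in x₀..(x - δ), t ^ (-1 - β : ℝ)) ≤ 1 / (β * x₀ ^ β) :=
          int_rpow_neg_one_sub_le x₀ (x - δ) β hβ0 hx₀pos hx1
        rw [intervalIntegral.integral_add ((hi1.const_mul δ)) ((hi2.const_mul (C * δ))),
          intervalIntegral.integral_const_mul, intervalIntegral.integral_const_mul]
        have hb1 := mul_le_mul_of_nonneg_left hv1 hδ.le
        have hb2 := mul_le_mul_of_nonneg_left hv2 (by positivity : (0:ℝ) ≤ C * δ)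
        have he1 : δ * (1 / x₀) = δ / x₀ := by ring
        have he2 : C * δ * (1 / (β * x₀ ^ β)) = C * δ / (β * x₀ ^ β) := by ring
        linarith
      have hIb0 : (0:ℝ) ≤ ∫ t in x₀..(x - δ), b t := by
        apply intervalIntegral.integral_nonneg hx1
        intro t ht
        have ht0 : 0 < t := lt_of_lt_of_le hx₀pos ht.1
        have : 0 < t ^ β := Real.rpow_pos_of_pos ht0 β
        rw [hbdef]
        positivity
      have hMb' : |∫ t in x₀..(x - δ), (f t + f (t + δ))| ≤ δ / x₀ + C * δ / (β * x₀ ^ β) := by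
        refine hMb.trans ?_
        rw [abs_of_nonneg hIb0]
        exact hIb
      -- combine
      have habs : |J + J| ≤ δ / x₀ + δ / x₀ + (δ / x₀ + C * δ / (β * x₀ ^ β)) := by
        rw [h2J]
        calc |(∫ t in x₀..(x₀ + δ), f t) + (∫ t in (x - δ)..x, f t)
            + ∫ t in x₀..(x - δ), (f t + f (t + δ))|
            ≤ |(∫ t in x₀..(x₀ + δ), f t) + (∫ t in (x - δ)..x, f t)|
              + |∫ t in x₀..(x - δ), (f t + f (t + δ))| := abs_add_le _ _
          _ ≤ (|∫ t in x₀..(x₀ + δ), f t| + |∫ t in (x - δ)..x, f t|)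
              + |∫ t in x₀..(x - δ), (f t + f (t + δ))| := by
                apply add_le_add_left (abs_add_le _ _)
          _ ≤ δ / x₀ + δ / x₀ + (δ / x₀ + C * δ / (β * x₀ ^ β)) := by
                apply add_le_add (add_le_add hAb hQb) hMb'
      have h2Jeq : |J + J| = 2 * |J| := by
        rw [show J + J = 2 * J by ring, abs_mul]
        norm_num
      rw [h2Jeq] at habs
      have hcd : C * δ / (2 * β * x₀ ^ β) = (C * δ / (β * x₀ ^ β)) / 2 := by
        rw [div_div]
        ring_nf
      rw [hcd]
      linarith
  -- final numeric comparison
  refine hmain.trans ?_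
  have hβx : 0 < x₀ ^ β := Real.rpow_pos_of_pos hx₀pos β
  have haβ : 0 < a ^ β := Real.rpow_pos_of_pos ha β
  have hab1 : a ^ (β - 1) = a ^ β / a := by
    rw [Real.rpow_sub ha, Real.rpow_one]
  have hterm2 : C * δ / (2 * β * x₀ ^ β) ≤ (30 * C / β * a ^ (β - 1)) / (a ^ β * x₀ ^ β) := by
    have hL : C * δ / (2 * β * x₀ ^ β) = (π / 2) * (C / (a * β * x₀ ^ β)) := by
      rw [hδdef]; field_simp; try ring
    have hR : (30 * C / β * a ^ (β - 1)) / (a ^ β * x₀ ^ β) = 30 * (C / (a * β * x₀ ^ β)) := by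
      rw [hab1]; field_simp; try ring
    rw [hL, hR]
    apply mul_le_mul_of_nonneg_right _ (by positivity)
    nlinarith [Real.pi_le_four]
  have hterm1 : 3 / 2 * (δ / x₀) ≤ (10 * π) / (a ^ β * x₀ ^ β) := by
    have hL : 3 / 2 * (δ / x₀) = (3 / 2 * π) / (a * x₀) := by
      rw [hδdef]; field_simp; try ring
    have hmul : a ^ β * x₀ ^ β = (a * x₀) ^ β := (Real.mul_rpow ha.le hx₀pos.le).symm
    rw [hL, hmul]
    have h1 : (a * x₀) ^ β ≤ a * x₀ := by
      have := Real.rpow_le_rpow_of_exponent_le hax1 hβ1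
      rwa [Real.rpow_one] at this
    have h2 : 0 < (a * x₀) ^ β := Real.rpow_pos_of_pos (by nlinarith) β
    apply div_le_div₀ (by positivity) (by nlinarith [Real.pi_pos]) h2 h1
  have hsplit : rConst a β C / (a ^ β * x₀ ^ β)
      = (30 * C / β * a ^ (β - 1)) / (a ^ β * x₀ ^ β) + (10 * π) / (a ^ β * x₀ ^ β) := by
    rw [rConst, add_div]
  rw [hsplit]
  linarith

/-- Lemma 4.2: if `|θ'(t) - a| ≤ C/t^β` a.e. on `(0,∞)` with `a ≠ 0`, then for
`x ≥ x₀ > s(|a|,β,C)`, the oscillatory integrals `∫_{x₀}^x sin θ(t)/t dt` and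
`∫_{x₀}^x cos θ(t)/t dt` are bounded by `r(|a|,β,C)/(|a|^β x₀^β)`. -/
theorem oscillatory_integral_estimate_frequency
    (β C a : ℝ) (hβ : β ∈ Set.Ioc (0:ℝ) 1) (hC : 0 < C) (ha : a ≠ 0)
    (θ θ' : ℝ → ℝ)
    (hAC : ∀ s t : ℝ, 0 < s → s ≤ t → θ t - θ s = ∫ u in s..t, θ' u)
    (hInt : ∀ s t : ℝ, 0 < s → s ≤ t → IntervalIntegrable θ' volume s t)
    (hbd : ∀ᵐ t ∂volume, 0 < t → |θ' t - a| ≤ C / t ^ β)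
    (x₀ x : ℝ) (hx₀ : sConst |a| β C < x₀) (hx : x₀ ≤ x) :
    |∫ t in x₀..x, Real.sin (θ t) / t| ≤ rConst |a| β C / (|a| ^ β * x₀ ^ β) ∧
    |∫ t in x₀..x, Real.cos (θ t) / t| ≤ rConst |a| β C / (|a| ^ β * x₀ ^ β) := by
  obtain ⟨hβ0, hβ1⟩ := hβ
  have hsin1 : ∀ y : ℝ, |Real.sin y| ≤ 1 := fun y =>
    abs_le.2 ⟨Real.neg_one_le_sin y, Real.sin_le_one y⟩
  have hcos1 : ∀ y : ℝ, |Real.cos y| ≤ 1 := fun y =>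
    abs_le.2 ⟨Real.neg_one_le_cos y, Real.cos_le_one y⟩
  have hsinl : ∀ y z : ℝ, |Real.sin y - Real.sin z| ≤ |y - z| := by
    intro y z
    rw [Real.sin_sub_sin]
    have h1 : |Real.sin ((y - z) / 2)| ≤ |(y - z) / 2| := Real.abs_sin_le_abs
    have h2 : |Real.cos ((y + z) / 2)| ≤ 1 := hcos1 _
    calc |2 * Real.sin ((y - z) / 2) * Real.cos ((y + z) / 2)|
        = 2 * |Real.sin ((y - z) / 2)| * |Real.cos ((y + z) / 2)| := by
          rw [abs_mul, abs_mul]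
          norm_num
      _ ≤ 2 * |(y - z) / 2| * 1 := by
          apply mul_le_mul _ h2 (abs_nonneg _) (by positivity)
          apply mul_le_mul_of_nonneg_left h1 (by norm_num)
      _ = |y - z| := by
          rw [abs_div]
          norm_num
          ring
  have hcosl : ∀ y z : ℝ, |Real.cos y - Real.cos z| ≤ |y - z| := by
    intro y z
    rw [Real.cos_sub_cos]
    have h1 : |Real.sin ((y - z) / 2)| ≤ |(y - z) / 2| := Real.abs_sin_le_abs
    have h2 : |Real.sin ((y + z) / 2)| ≤ 1 := hsin1 _
    calc |-2 * Real.sin ((y + z) / 2) * Real.sin ((y - z) / 2)|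
        = 2 * |Real.sin ((y + z) / 2)| * |Real.sin ((y - z) / 2)| := by
          rw [abs_mul, abs_mul]
          norm_num
      _ ≤ 2 * 1 * |(y - z) / 2| := by
          apply mul_le_mul _ h1 (abs_nonneg _) (by positivity)
          apply mul_le_mul_of_nonneg_left h2 (by norm_num)
      _ = |y - z| := by
          rw [abs_div]
          norm_num
          ring
  rcases lt_or_gt_of_ne ha with hneg | hpos
  · -- a < 0
    have habs : |a| = -a := abs_of_neg hneg
    rw [habs] at hx₀ ⊢
    have ha' : 0 < -a := by linarith
    have hAC' : ∀ s t : ℝ, 0 < s → s ≤ t → (-θ t) - (-θ s) = ∫ u in s..t, -θ' u := by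
      intro s t hs hst
      rw [intervalIntegral.integral_neg]
      have := hAC s t hs hst
      linarith
    have hInt' : ∀ s t : ℝ, 0 < s → s ≤ t →
        IntervalIntegrable (fun u => -θ' u) volume s t := fun s t hs hst =>
      (hInt s t hs hst).neg
    have hbd' : ∀ᵐ t ∂volume, 0 < t → |(-θ' t) - (-a)| ≤ C / t ^ β := by
      filter_upwards [hbd] with t h ht
      have h1 : (-θ' t) - (-a) = -(θ' t - a) := by ring
      rw [h1, abs_neg]
      exact h ht
    constructor
    · have hkey := osc_key β C (-a) hβ0 hβ1 hC ha' (fun t => -θ t) (fun t => -θ' t)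
        hAC' hInt' hbd' Real.sin hsin1 hsinl Real.continuous_sin Real.sin_add_pi
        x₀ x hx₀ hx
      have h1 : (∫ t in x₀..x, Real.sin (θ t) / t)
          = ∫ t in x₀..x, -(Real.sin (-θ t) / t) := by
        apply intervalIntegral.integral_congr
        intro t _
        simp only [Real.sin_neg]
        ring
      rw [h1, intervalIntegral.integral_neg, abs_neg]
      exact hkey
    · have hkey := osc_key β C (-a) hβ0 hβ1 hC ha' (fun t => -θ t) (fun t => -θ' t)
        hAC' hInt' hbd' Real.cos hcos1 hcosl Real.continuous_cos Real.cos_add_pi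
        x₀ x hx₀ hx
      have h1 : (∫ t in x₀..x, Real.cos (θ t) / t)
          = ∫ t in x₀..x, Real.cos (-θ t) / t := by
        apply intervalIntegral.integral_congr
        intro t _
        simp only [Real.cos_neg]
      rw [h1]
      exact hkey
  · -- a > 0
    have habs : |a| = a := abs_of_pos hpos
    rw [habs] at hx₀ ⊢
    exact ⟨osc_key β C a hβ0 hβ1 hC hpos θ θ' hAC hInt hbd Real.sin hsin1 hsinl
        Real.continuous_sin Real.sin_add_pi x₀ x hx₀ hx,
      osc_key β C a hβ0 hβ1 hC hpos θ θ' hAC hInt hbd Real.cos hcos1 hcosl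
        Real.continuous_cos Real.cos_add_pi x₀ x hx₀ hx⟩
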